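/- Let p ≥ 1, let P be a Borel probability measure on ℝ^d with finite p-th moment, let x₀ ≠ 0 be a real number, and let U : ℝ → ℝ be non-decreasing with lim_{x→−∞} U(x) = −∞. Define u(k,w) := inf_{Q ∈ B_k(P)} E_Q[U(x₀ + x₀⟨w, X⟩)], where X is the identity map on ℝ^d. Then for every w ∈ ℝ^d with w ≠ 0 and E_P[U(x₀ + x₀⟨w, X⟩)] < ∞, one has lim_{k→∞} u(k,w) = −∞. -/

import Mathlib

open MeasureTheory Filter
open scoped ENNReal

noncomputable section

abbrev Evec (d : ℕ) : Type := EuclideanSpace ℝ (Fin d)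

def couplings {d : ℕ} (P Q : Measure (Evec d)) : Set (Measure (Evec d × Evec d)) :=
  {π | IsProbabilityMeasure π ∧ π.map Prod.fst = P ∧ π.map Prod.snd = Q}

noncomputable def Wdist {d : ℕ} (p : ℝ) (P Q : Measure (Evec d)) : ℝ≥0∞ :=
  ⨅ π ∈ couplings P Q, (∫⁻ z, (‖z.1 - z.2‖₊ : ℝ≥0∞) ^ p ∂π) ^ (1 / p)

def wBall {d : ℕ} (p k : ℝ) (P : Measure (Evec d)) : Set (Measure (Evec d)) :=
  {Q | IsProbabilityMeasure Q ∧ (∫⁻ x, (‖x‖₊ : ℝ≥0∞) ^ p ∂Q) < ⊤ ∧ Wdist p P Q ≤ ENNReal.ofReal k}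

/-- The (extended-real-valued) expectation `E_Q[f] = E_Q[f⁺] − E_Q[f⁻]`. -/
noncomputable def eexp {α : Type*} [MeasurableSpace α] (Q : Measure α) (f : α → ℝ) : EReal :=
  ((∫⁻ x, ENNReal.ofReal (f x) ∂Q : ℝ≥0∞) : EReal) - ((∫⁻ x, ENNReal.ofReal (-(f x)) ∂Q : ℝ≥0∞) : EReal)

/-- The robust value `u(k,w) = inf_{Q ∈ B_k(P)} E_Q[U(x₀ + x₀⟨w,X⟩)]`. -/
noncomputable def uval {d : ℕ} (p k x₀ : ℝ) (P : Measure (Evec d)) (U : ℝ → ℝ) (w : Evec d) : EReal :=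
  ⨅ Q ∈ wBall p k P, eexp Q (fun x => U (x₀ + x₀ * (inner ℝ w x : ℝ)))

lemma eexp_coe_aux (a : ℝ) :
    ((ENNReal.ofReal a : ℝ≥0∞) : EReal) - ((ENNReal.ofReal (-a) : ℝ≥0∞) : EReal) = (a : EReal) := by
  rcases le_total 0 a with h | h
  · simp [EReal.coe_ennreal_ofReal, max_eq_left h, ENNReal.ofReal_eq_zero.2 (by linarith : -a ≤ 0)]
  · simp [EReal.coe_ennreal_ofReal, ENNReal.ofReal_eq_zero.2 h, max_eq_left (by linarith : 0 ≤ -a)]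

lemma eexp_dirac {d : ℕ} (f : Evec d → ℝ) (a : Evec d) :
    eexp (Measure.dirac a) f = (f a : EReal) := by
  rw [eexp, lintegral_dirac, lintegral_dirac, eexp_coe_aux]

/-- The Dirac mass at `a` is in the Wasserstein ball of radius `k` provided
`(∫‖x‖^p dP)^{1/p} + ‖a‖ ≤ k`. -/
lemma dirac_mem_wBall {d : ℕ} (p k : ℝ) (hp : 1 ≤ p)
    (P : Measure (Evec d)) [IsProbabilityMeasure P]
    (hmom : (∫⁻ x, (‖x‖₊ : ℝ≥0∞) ^ p ∂P) < ⊤) (a : Evec d)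
    (hk : ((∫⁻ x, (‖x‖₊ : ℝ≥0∞) ^ p ∂P) ^ (1/p)).toReal + ‖a‖ ≤ k) :
    Measure.dirac a ∈ wBall p k P := by
  have hp0 : p ≠ 0 := by positivity
  set C : ℝ≥0∞ := (∫⁻ x, (‖x‖₊ : ℝ≥0∞) ^ p ∂P) ^ (1/p) with hC
  have hCfin : C ≠ ⊤ := by
    exact (ENNReal.rpow_lt_top_of_nonneg (by positivity) hmom.ne).ne
  refine ⟨by infer_instance, ?_, ?_⟩
  · rw [lintegral_dirac]
    exact ENNReal.rpow_lt_top_of_nonneg (by positivity) ENNReal.coe_ne_top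
  · -- the product coupling P ⊗ δ_a
    set π : Measure (Evec d × Evec d) := P.map (fun x => (x, a)) with hπ
    have hmeas : Measurable (fun x : Evec d => (x, a)) := measurable_id.prodMk measurable_const
    have hπmem : π ∈ couplings P (Measure.dirac a) := by
      refine ⟨by rw [hπ]; exact Measure.isProbabilityMeasure_map hmeas.aemeasurable, ?_, ?_⟩
      · rw [hπ, Measure.map_map measurable_fst hmeas]
        have : (Prod.fst ∘ fun x : Evec d => (x, a)) = id := rfl
        rw [this, Measure.map_id]
      · rw [hπ, Measure.map_map measurable_snd hmeas]
        have : (Prod.snd ∘ fun x : Evec d => (x, a)) = fun _ => a := rfl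
        rw [this, Measure.map_const, measure_univ, one_smul]
    have hbound : Wdist p P (Measure.dirac a)
        ≤ (∫⁻ x, (‖x - a‖₊ : ℝ≥0∞) ^ p ∂P) ^ (1/p) := by
      refine le_trans (iInf₂_le π hπmem) (le_of_eq ?_)
      congr 1
      rw [hπ, lintegral_map (by fun_prop) hmeas]
    have hsum : (∫⁻ x, (‖x - a‖₊ : ℝ≥0∞) ^ p ∂P) ^ (1/p) ≤ C + (‖a‖₊ : ℝ≥0∞) := by
      calc (∫⁻ x, (‖x - a‖₊ : ℝ≥0∞) ^ p ∂P) ^ (1/p)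
          ≤ (∫⁻ x, ((‖x‖₊ : ℝ≥0∞) + (‖a‖₊ : ℝ≥0∞)) ^ p ∂P) ^ (1/p) := by
            gcongr with x
            · rw [← ENNReal.coe_add]
              exact_mod_cast nnnorm_sub_le x a
        _ ≤ C + (∫⁻ _, (‖a‖₊ : ℝ≥0∞) ^ p ∂P) ^ (1/p) :=
            ENNReal.lintegral_Lp_add_le (by fun_prop) aemeasurable_const hp
        _ = C + (‖a‖₊ : ℝ≥0∞) := by
            rw [lintegral_const, measure_univ, mul_one, ← ENNReal.rpow_mul,
              mul_one_div_cancel hp0, ENNReal.rpow_one]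
    refine le_trans hbound (le_trans hsum ?_)
    have : C + (‖a‖₊ : ℝ≥0∞) = ENNReal.ofReal (C.toReal + ‖a‖) := by
      rw [ENNReal.ofReal_add ENNReal.toReal_nonneg (norm_nonneg a),
        ENNReal.ofReal_toReal hCfin, ← coe_nnnorm, ENNReal.ofReal_coe_nnreal]
    rw [this]
    exact ENNReal.ofReal_le_ofReal hk

/-- `lim_{k→∞} u(k,w) = −∞` for every `w ≠ 0` with `E_P[U(x₀+x₀⟨w,X⟩)] < ∞`. -/
theorem uval_tendsto_bot {d : ℕ} (p x₀ : ℝ) (hp : 1 ≤ p) (hx₀ : x₀ ≠ 0)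
    (P : Measure (Evec d)) [IsProbabilityMeasure P]
    (hmom : (∫⁻ x, (‖x‖₊ : ℝ≥0∞) ^ p ∂P) < ⊤)
    (U : ℝ → ℝ) (hU : Monotone U) (hUbot : Tendsto U atBot atBot)
    (w : Evec d) (hw : w ≠ 0)
    (hfin : eexp P (fun x => U (x₀ + x₀ * (inner ℝ w x : ℝ))) < ⊤) :
    Tendsto (fun k : ℝ => uval p k x₀ P U w) atTop (nhds (⊥ : EReal)) := by
  rw [EReal.tendsto_nhds_bot_iff_real]
  intro M
  obtain ⟨T, hT⟩ : ∃ T, U T < M := (hUbot.eventually (eventually_lt_atBot M)).exists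
  have hw2 : ‖w‖ ^ 2 ≠ 0 := pow_ne_zero 2 (norm_ne_zero_iff.2 hw)
  set s : ℝ := (T / x₀ - 1) / ‖w‖ ^ 2 with hs
  set a : Evec d := s • w with ha
  have hinner : x₀ + x₀ * (inner ℝ w a : ℝ) = T := by
    rw [ha, real_inner_smul_right, real_inner_self_eq_norm_sq, hs]
    field_simp
    ring
  filter_upwards [eventually_ge_atTop
    (((∫⁻ x, (‖x‖₊ : ℝ≥0∞) ^ p ∂P) ^ (1/p)).toReal + ‖a‖)] with k hk
  have hmem : Measure.dirac a ∈ wBall p k P := dirac_mem_wBall p k hp P hmom a hk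
  have h1 : uval p k x₀ P U w ≤ eexp (Measure.dirac a)
      (fun x => U (x₀ + x₀ * (inner ℝ w x : ℝ))) := iInf₂_le _ hmem
  rw [eexp_dirac] at h1
  rw [hinner] at h1
  exact lt_of_le_of_lt h1 (EReal.coe_lt_coe_iff.2 hT)
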